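/- Suppose the simple root α is the only simple root in its W-orbit R_α = W·α. Then the closure of K_α = ∪_{w∈W} w(F_α) equals the union of hyperplanes ∪_{γ ∈ R_α ∩ R₊} H_γ. -/

import Mathlib

open scoped RealInnerProductSpace
open Metric Set

variable {V : Type*} [NormedAddCommGroup V] [InnerProductSpace ℝ V] [FiniteDimensional ℝ V]

/-- Orthogonal reflection in the hyperplane orthogonal to the unit vector `α`. -/
noncomputable def sRefl (α x : V) : V := x - (2 * ⟪α, x⟫) • α

/-- The one-sided reflection `r_α`: identity on `{α·x ≥ 0}`, reflection on `{α·x ≤ 0}`,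
given by the concise formula `r_α(x) = x + 2(α·x)⁻ α`. -/
noncomputable def rRefl (α x : V) : V := x + (2 * max (-⟪α, x⟫) 0) • α

/-- `R` is a reduced root system of unit vectors. -/
def IsRootSystem (R : Finset V) : Prop :=
  (∀ α ∈ R, ‖α‖ = 1) ∧
  (∀ α ∈ R, ∀ t : ℝ, t • α ∈ R → t = 1 ∨ t = -1) ∧
  (∀ α ∈ R, ∀ β ∈ R, sRefl α β ∈ R)

/-- `Rpos` is a positive subsystem of `R`: the roots having positive inner product
against some vector `u` lying on no root hyperplane. -/
def IsPositiveSystem (R Rpos : Finset V) : Prop :=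
  ∃ u : V, (∀ β ∈ R, ⟪β, u⟫ ≠ 0) ∧ ∀ β, β ∈ Rpos ↔ β ∈ R ∧ 0 < ⟪β, u⟫

/-- `S` is the simple system associated with the positive subsystem `Rpos`. -/
def IsSimpleSystem (Rpos S : Finset V) : Prop :=
  S ⊆ Rpos ∧ LinearIndependent ℝ (fun x : (S : Set V) => (x : V)) ∧
  Submodule.span ℝ (S : Set V) = Submodule.span ℝ (Rpos : Set V) ∧
  ∀ β ∈ Rpos, ∃ c : V → ℝ, (∀ α ∈ S, 0 ≤ c α) ∧ β = ∑ α ∈ S, c α • α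

/-- The reflection group `W` generated by the reflections `s_α`, `α ∈ R`. -/
noncomputable def weylGroup (R : Finset V) : Subgroup (V ≃ₗᵢ[ℝ] V) :=
  Subgroup.closure {w : V ≃ₗᵢ[ℝ] V | ∃ α ∈ R, ∀ x, w x = sRefl α x}

/-- The facet associated with a sign pattern `(Ip, I0, Im)` on the positive roots. -/
def facet (Ip I0 Im : Finset V) : Set V :=
  {x | (∀ α ∈ Ip, 0 < ⟪α, x⟫) ∧ (∀ α ∈ I0, ⟪α, x⟫ = 0) ∧ (∀ α ∈ Im, ⟪α, x⟫ < 0)}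

/-- `(Ip, I0, Im)` is a partition of the positive system `Rpos`. -/
def IsFacetPartition (Rpos Ip I0 Im : Finset V) : Prop :=
  ((Ip : Set V) ∪ (I0 : Set V) ∪ (Im : Set V) = (Rpos : Set V)) ∧
  Disjoint (Ip : Set V) (I0 : Set V) ∧ Disjoint (Ip : Set V) (Im : Set V) ∧
  Disjoint (I0 : Set V) (Im : Set V)

/-- The closed positive Weyl chamber. -/
def closedChamber (S : Finset V) : Set V := {x | ∀ α ∈ S, 0 ≤ ⟪α, x⟫}

/-- The face `F_α` of the Weyl chamber, supported by the wall `H_α`. -/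
def faceF (S : Finset V) (α : V) : Set V :=
  {x | ⟪α, x⟫ = 0 ∧ ∀ β ∈ S, β ≠ α → 0 < ⟪β, x⟫}

set_option linter.unusedSectionVars false
set_option linter.unusedVariables false
set_option maxHeartbeats 1000000

lemma inner_sRefl (α x y : V) : ⟪sRefl α x, y⟫ = ⟪x, y⟫ - 2 * ⟪α, x⟫ * ⟪α, y⟫ := by
  simp [sRefl, inner_sub_left, real_inner_smul_left]

lemma inner_self_one {α : V} (hα : ‖α‖ = 1) : ⟪α, α⟫ = 1 := by
  rw [real_inner_self_eq_norm_sq, hα]; norm_num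

lemma sRefl_sRefl (α : V) (hα : ‖α‖ = 1) (x : V) : sRefl α (sRefl α x) = x := by
  simp only [sRefl, inner_sub_right, real_inner_smul_right, inner_self_one hα]
  module

lemma norm_sRefl (α : V) (hα : ‖α‖ = 1) (x : V) : ‖sRefl α x‖ = ‖x‖ := by
  have : ⟪sRefl α x, sRefl α x⟫ = ⟪x, x⟫ := by
    simp only [sRefl, inner_sub_left, inner_sub_right, real_inner_smul_left,
      real_inner_smul_right, inner_self_one hα, real_inner_comm α x]
    ring
  have h2 := real_inner_self_eq_norm_sq (sRefl α x)
  have h3 := real_inner_self_eq_norm_sq x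
  rw [h2, h3] at this
  nlinarith [norm_nonneg (sRefl α x), norm_nonneg x]

/-- `sRefl α` as a linear isometry equivalence, for `α` a unit vector. -/
noncomputable def sReflLI (α : V) (hα : ‖α‖ = 1) : V ≃ₗᵢ[ℝ] V where
  toLinearEquiv := LinearEquiv.ofInvolutive
    { toFun := sRefl α
      map_add' := by intro x y; simp [sRefl, inner_add_right]; module
      map_smul' := by intro c x; simp [sRefl, real_inner_smul_right]; module }
    (fun x => sRefl_sRefl α hα x)
  norm_map' := norm_sRefl α hα

@[simp] lemma sReflLI_apply (α : V) (hα : ‖α‖ = 1) (x : V) : sReflLI α hα x = sRefl α x := rfl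


lemma sReflLI_mem_weylGroup {R : Finset V} {α : V} (hα : α ∈ R) (h1 : ‖α‖ = 1) :
    sReflLI α h1 ∈ weylGroup R :=
  Subgroup.subset_closure ⟨α, hα, fun _ => rfl⟩

lemma weylGroup_maps_R {R : Finset V} (hR : IsRootSystem R) :
    ∀ w ∈ weylGroup R, ∀ β ∈ R, w β ∈ R := by
  classical
  intro w hw
  induction hw using Subgroup.closure_induction with
  | mem x hx =>
    obtain ⟨α, hαR, hx⟩ := hx
    intro β hβ
    rw [hx β]
    exact hR.2.2 α hαR β hβ
  | one => intro β hβ; simpa using hβ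
  | mul x y hx hy ihx ihy =>
    intro β hβ
    have : (x * y) β = x (y β) := by rw [LinearIsometryEquiv.coe_mul]; rfl
    rw [this]; exact ihx _ (ihy _ hβ)
  | inv x hx ih =>
    intro β hβ
    have himg : Finset.image (fun v => x v) R = R := by
      apply Finset.eq_of_subset_of_card_le
      · intro b hb
        obtain ⟨a, ha, rfl⟩ := Finset.mem_image.mp hb
        exact ih a ha
      · rw [Finset.card_image_of_injective _ x.injective]
    rw [← himg] at hβ
    obtain ⟨a, ha, rfl⟩ := Finset.mem_image.mp hβ
    have : x⁻¹ (x a) = a := x.symm_apply_apply a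
    rw [show ((x⁻¹ : V ≃ₗᵢ[ℝ] V) : V → V) = x.symm from rfl]
    simpa [this] using ha

lemma weylGroup_fixes_orth {R : Finset V} :
    ∀ w ∈ weylGroup R, ∀ x : V, (∀ β ∈ R, ⟪β, x⟫ = 0) → w x = x := by
  intro w hw
  induction hw using Subgroup.closure_induction with
  | mem g hg =>
    intro x hx
    obtain ⟨α, hαR, hg⟩ := hg
    rw [hg x, sRefl, hx α hαR]
    simp
  | one => intro x _; rfl
  | mul g g' hg hg' ihg ihg' =>
    intro x hx
    have : (g * g') x = g (g' x) := by rw [LinearIsometryEquiv.coe_mul]; rfl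
    rw [this, ihg' x hx, ihg x hx]
  | inv g hg ih =>
    intro x hx
    have := ih x hx
    have h2 : g.symm (g x) = g.symm x := by rw [this]
    rw [show ((g⁻¹ : V ≃ₗᵢ[ℝ] V) : V → V) = g.symm from rfl]
    rw [← h2, g.symm_apply_apply]

lemma weylGroup_ext {R : Finset V} {w w' : V ≃ₗᵢ[ℝ] V} (hw : w ∈ weylGroup R)
    (hw' : w' ∈ weylGroup R) (h : ∀ β ∈ R, w β = w' β) : w = w' := by
  have hg : w'⁻¹ * w ∈ weylGroup R := mul_mem (inv_mem hw') hw
  have hfix : ∀ β ∈ R, (w'⁻¹ * w) β = β := by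
    intro β hβ
    have : (w'⁻¹ * w) β = w'.symm (w β) := rfl
    rw [this, h β hβ, w'.symm_apply_apply]
  -- the group element g fixes span R and its orthogonal complement
  set K : Submodule ℝ V := Submodule.span ℝ (R : Set V) with hK
  have hspan : ∀ x ∈ K, (w'⁻¹ * w) x = x := by
    intro x hx
    induction hx using Submodule.span_induction with
    | mem y hy => exact hfix y hy
    | zero => simp
    | add y z _ _ ihy ihz => rw [map_add, ihy, ihz]
    | smul c y _ ihy => rw [map_smul, ihy]
  have horth : ∀ x ∈ Kᗮ, (w'⁻¹ * w) x = x := by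
    intro x hx
    refine weylGroup_fixes_orth _ hg x fun β hβ => ?_
    exact (Submodule.mem_orthogonal K x).mp hx β (Submodule.subset_span hβ)
  have : ∀ x : V, (w'⁻¹ * w) x = x := by
    intro x
    have hx : x ∈ K ⊔ Kᗮ := by
      rw [Submodule.sup_orthogonal_of_hasOrthogonalProjection]; trivial
    obtain ⟨a, ha, b, hb, rfl⟩ := Submodule.mem_sup.mp hx
    rw [map_add, hspan a ha, horth b hb]
  have hgid : w'⁻¹ * w = 1 := by
    ext x; simpa using this x
  exact (inv_mul_eq_one.mp hgid).symm

lemma weylGroup_finite {R : Finset V} (hR : IsRootSystem R) :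
    Finite (weylGroup R) := by
  classical
  let g : weylGroup R → ({x // x ∈ R} → {x // x ∈ R}) := fun w => fun β =>
    ⟨(w : V ≃ₗᵢ[ℝ] V) β.1, weylGroup_maps_R hR _ w.2 β.1 β.2⟩
  have hginj : Function.Injective g := by
    intro w w' h
    ext : 1
    refine weylGroup_ext w.2 w'.2 fun β hβ => ?_
    exact congrArg Subtype.val (congrFun h ⟨β, hβ⟩)
  exact Finite.of_injective g hginj

lemma exists_chamber_rep {R Rpos S : Finset V} (hR : IsRootSystem R)
    {u : V} (hiff : ∀ β, β ∈ Rpos ↔ β ∈ R ∧ 0 < ⟪β, u⟫)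
    (hSR : S ⊆ Rpos) (x : V) :
    ∃ w ∈ weylGroup R, ∀ δ ∈ S, 0 ≤ ⟪δ, (w : V ≃ₗᵢ[ℝ] V) x⟫ := by
  haveI : Finite (weylGroup R) := weylGroup_finite hR
  haveI : Nonempty (weylGroup R) := ⟨1⟩
  obtain ⟨w₀, hw₀⟩ := Finite.exists_max (fun w : weylGroup R => ⟪(w : V ≃ₗᵢ[ℝ] V) x, u⟫)
  refine ⟨w₀, w₀.2, fun δ hδS => ?_⟩
  have hδp := (hiff δ).mp (hSR hδS)
  have hδ1 : ‖δ‖ = 1 := hR.1 δ hδp.1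
  have hmem : sReflLI δ hδ1 * (w₀ : V ≃ₗᵢ[ℝ] V) ∈ weylGroup R :=
    mul_mem (sReflLI_mem_weylGroup hδp.1 hδ1) w₀.2
  have hle := hw₀ ⟨_, hmem⟩
  have happ : ((sReflLI δ hδ1 * (w₀ : V ≃ₗᵢ[ℝ] V)) : V ≃ₗᵢ[ℝ] V) x
      = sRefl δ ((w₀ : V ≃ₗᵢ[ℝ] V) x) := rfl
  simp only [happ, inner_sRefl] at hle
  nlinarith [hδp.2, hle]


lemma neg_mem_R {R : Finset V} (hR : IsRootSystem R) {β : V} (hβ : β ∈ R) : -β ∈ R := by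
  have h1 : ‖β‖ = 1 := hR.1 β hβ
  have : sRefl β β = -β := by
    simp only [sRefl, inner_self_one h1]
    module
  rw [← this]
  exact hR.2.2 β hβ β hβ

lemma sReflLI_self {β : V} (h1 : ‖β‖ = 1) : sReflLI β h1 β = -β := by
  simp only [sReflLI_apply, sRefl, inner_self_one h1]
  module

lemma generic_mem_K {R Rpos S : Finset V} (hR : IsRootSystem R)
    {u : V} (hu : ∀ β ∈ R, ⟪β, u⟫ ≠ 0) (hiff : ∀ β, β ∈ Rpos ↔ β ∈ R ∧ 0 < ⟪β, u⟫)
    (hS : IsSimpleSystem Rpos S) (α : V) (hα : α ∈ S)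
    (horbit : ∀ β ∈ S, (∃ w ∈ weylGroup R, w α = β) → β = α)
    {γ x : V} (hγ : γ ∈ Rpos) (hγorb : ∃ w ∈ weylGroup R, (w : V ≃ₗᵢ[ℝ] V) α = γ)
    (hx0 : ⟪γ, x⟫ = 0) (hgen : ∀ δ ∈ R, δ ≠ γ → δ ≠ -γ → ⟪δ, x⟫ ≠ 0) :
    ∃ w ∈ weylGroup R, x ∈ (w : V ≃ₗᵢ[ℝ] V) '' faceF S α := by
  obtain ⟨w₀, hw₀W, hcham⟩ := exists_chamber_rep hR hiff hS.1 x
  set y := (w₀ : V ≃ₗᵢ[ℝ] V) x with hy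
  obtain ⟨w₁, hw₁W, hw₁α⟩ := hγorb
  have hγR : γ ∈ R := ((hiff γ).mp hγ).1
  set β := (w₀ : V ≃ₗᵢ[ℝ] V) γ with hβ
  have hβR : β ∈ R := weylGroup_maps_R hR w₀ hw₀W γ hγR
  have hβy : ⟪β, y⟫ = 0 := by
    rw [hβ, hy, LinearIsometryEquiv.inner_map_map]; exact hx0
  have hβorb : ∃ w ∈ weylGroup R, (w : V ≃ₗᵢ[ℝ] V) α = β :=
    ⟨w₀ * w₁, mul_mem hw₀W hw₁W, by
      rw [LinearIsometryEquiv.coe_mul, Function.comp_apply, hw₁α]⟩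
  have hβ1 : ‖β‖ = 1 := hR.1 β hβR
  -- ν : the positive root among β, -β
  obtain ⟨ν, hνpos, hνorb, hνy, hνββ⟩ :
      ∃ ν, ν ∈ Rpos ∧ (∃ w ∈ weylGroup R, (w : V ≃ₗᵢ[ℝ] V) α = ν) ∧ ⟪ν, y⟫ = 0 ∧
        (ν = β ∨ ν = -β) := by
    rcases lt_or_gt_of_ne (hu β hβR) with hneg | hposi
    · refine ⟨-β, (hiff _).mpr ⟨neg_mem_R hR hβR, by rw [inner_neg_left]; linarith⟩, ?_, ?_, Or.inr rfl⟩
      · obtain ⟨w, hwW, hwα⟩ := hβorb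
        exact ⟨sReflLI β hβ1 * w, mul_mem (sReflLI_mem_weylGroup hβR hβ1) hwW, by
          rw [LinearIsometryEquiv.coe_mul, Function.comp_apply, hwα, sReflLI_self]⟩
      · rw [inner_neg_left, hβy, neg_zero]
    · exact ⟨β, (hiff _).mpr ⟨hβR, hposi⟩, hβorb, hβy, Or.inl rfl⟩
  -- any simple root vanishing on y equals ν
  have claim1 : ∀ δ ∈ S, ⟪δ, y⟫ = 0 → δ = ν := by
    intro δ hδS hδy
    have hδpos : δ ∈ Rpos := hS.1 hδS
    have hinv : ∀ z : V, w₀ (w₀⁻¹ z) = z := fun z => w₀.apply_symm_apply z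
    have hδ0 : ⟪w₀⁻¹ δ, x⟫ = 0 := by
      have h := LinearIsometryEquiv.inner_map_map w₀ (w₀⁻¹ δ) x
      rw [hinv δ] at h
      exact h.symm.trans hδy
    have hδR : w₀⁻¹ δ ∈ R :=
      weylGroup_maps_R hR _ (inv_mem hw₀W) δ (((hiff δ).mp hδpos).1)
    have hδβ : δ = β ∨ δ = -β := by
      by_cases h1 : w₀⁻¹ δ = γ
      · left
        rw [hβ, ← h1, hinv δ]
      · by_cases h2 : w₀⁻¹ δ = -γ
        · right
          rw [hβ, ← neg_neg γ, ← h2, map_neg, hinv δ, neg_neg]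
        · exact absurd hδ0 (hgen _ hδR h1 h2)
    have hδu : 0 < ⟪δ, u⟫ := ((hiff δ).mp hδpos).2
    have hνu : 0 < ⟪ν, u⟫ := ((hiff ν).mp hνpos).2
    rcases hδβ with rfl | rfl <;> rcases hνββ with rfl | rfl
    · rfl
    · rw [inner_neg_left] at hνu; linarith
    · rw [inner_neg_left] at hδu; linarith
    · rfl
  -- ν is a simple root
  have hνS : ν ∈ S := by
    obtain ⟨c, hc0, hcsum⟩ := hS.2.2.2 ν hνpos
    have hsumy : ∑ δ ∈ S, c δ * ⟪δ, y⟫ = 0 := by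
      have : ⟪ν, y⟫ = ∑ δ ∈ S, c δ * ⟪δ, y⟫ := by
        rw [hcsum, sum_inner]
        exact Finset.sum_congr rfl fun δ _ => real_inner_smul_left δ y (c δ)
      rw [← this, hνy]
    have hterm0 : ∀ δ ∈ S, c δ * ⟪δ, y⟫ = 0 :=
      (Finset.sum_eq_zero_iff_of_nonneg fun δ hδ =>
        mul_nonneg (hc0 δ hδ) (hcham δ hδ)).mp hsumy
    have hνu : 0 < ⟪ν, u⟫ := ((hiff ν).mp hνpos).2
    have hsumu : ⟪ν, u⟫ = ∑ δ ∈ S, c δ * ⟪δ, u⟫ := by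
      rw [hcsum, sum_inner]
      exact Finset.sum_congr rfl fun δ _ => real_inner_smul_left δ u (c δ)
    have : ∃ δ₀ ∈ S, c δ₀ ≠ 0 := by
      by_contra h
      push_neg at h
      rw [hsumu, Finset.sum_eq_zero (fun δ hδ => by rw [h δ hδ, zero_mul])] at hνu
      exact lt_irrefl 0 hνu
    obtain ⟨δ₀, hδ₀S, hδ₀c⟩ := this
    have : ⟪δ₀, y⟫ = 0 := by
      have := hterm0 δ₀ hδ₀S
      rcases mul_eq_zero.mp this with h | h
      · exact absurd h hδ₀c
      · exact h
    rw [← claim1 δ₀ hδ₀S this]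
    exact hδ₀S
  have hνα : ν = α := horbit ν hνS hνorb
  have hyface : y ∈ faceF S α := by
    constructor
    · rw [← hνα]; exact hνy
    · intro β' hβ'S hβ'ne
      refine lt_of_le_of_ne (hcham β' hβ'S) fun h => ?_
      exact hβ'ne (by rw [claim1 β' hβ'S h.symm, hνα])
  exact ⟨w₀⁻¹, inv_mem hw₀W, y, hyface, w₀.symm_apply_apply x⟩

lemma exists_generic_dir (γ : V) (D : Finset V)
    (h : ∀ δ ∈ D, ∃ w, ⟪γ, w⟫ = 0 ∧ ⟪δ, w⟫ ≠ 0) :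
    ∃ v, ⟪γ, v⟫ = 0 ∧ ∀ δ ∈ D, ⟪δ, v⟫ ≠ 0 := by
  classical
  induction D using Finset.induction_on with
  | empty => exact ⟨0, inner_zero_right γ, fun δ hδ => absurd hδ (Finset.notMem_empty δ)⟩
  | @insert a D haD ih =>
    obtain ⟨v, hv0, hv⟩ := ih fun δ hδ => h δ (Finset.mem_insert_of_mem hδ)
    obtain ⟨w, hw0, hwa⟩ := h a (Finset.mem_insert_self a D)
    obtain ⟨t, -, ht⟩ := (Set.Ioi_infinite (0:ℝ)).exists_notMem_finset
      ((insert a D).image fun δ => -⟪δ, v⟫ / ⟪δ, w⟫)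
    refine ⟨v + t • w, by rw [inner_add_right, real_inner_smul_right, hv0, hw0]; ring, ?_⟩
    intro δ hδ
    rw [inner_add_right, real_inner_smul_right]
    by_cases hδw : ⟪δ, w⟫ = 0
    · rw [hδw, mul_zero, add_zero]
      rcases Finset.mem_insert.mp hδ with rfl | hδD
      · exact absurd hδw hwa
      · exact hv δ hδD
    · intro hcontra
      apply ht
      refine Finset.mem_image.mpr ⟨δ, hδ, ?_⟩
      field_simp
      linarith


/-- if the simple root `α` is the only simple root in its `W`-orbit,
then the closure of `K_α = ∪_{w ∈ W} w(F_α)` is the union of the hyperplanes `H_γ`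
over the positive roots `γ` in the orbit of `α`. -/
theorem closure_K_eq_union_hyperplanes (R Rpos S : Finset V) (hR : IsRootSystem R)
    (hpos : IsPositiveSystem R Rpos) (hS : IsSimpleSystem Rpos S)
    (α : V) (hα : α ∈ S)
    (horbit : ∀ β ∈ S, (∃ w ∈ weylGroup R, w α = β) → β = α) :
    closure (⋃ w ∈ weylGroup R, (w : V → V) '' faceF S α) =
      ⋃ γ ∈ {γ : V | γ ∈ Rpos ∧ ∃ w ∈ weylGroup R, w α = γ},
        {x : V | ⟪γ, x⟫ = 0} := by
  classical
  obtain ⟨u, hu, hiff⟩ := hpos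
  have hαR : α ∈ R := ((hiff α).mp (hS.1 hα)).1
  apply le_antisymm
  · -- closure K ⊆ union of hyperplanes
    apply closure_minimal
    · rintro x hx
      simp only [Set.mem_iUnion] at hx
      obtain ⟨w, hwW, y, hyF, rfl⟩ := hx
      set β := w α with hβdef
      have hβR : β ∈ R := weylGroup_maps_R hR w hwW α hαR
      have hβ1 : ‖β‖ = 1 := hR.1 β hβR
      have hβx : ⟪β, w y⟫ = 0 := by
        rw [hβdef, LinearIsometryEquiv.inner_map_map]
        exact hyF.1
      rcases lt_or_gt_of_ne (hu β hβR) with hneg | hposi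
      · refine Set.mem_biUnion (show -β ∈ _ from ?_) ?_
        · refine ⟨(hiff _).mpr ⟨neg_mem_R hR hβR, by rw [inner_neg_left]; linarith⟩, ?_⟩
          exact ⟨sReflLI β hβ1 * w, mul_mem (sReflLI_mem_weylGroup hβR hβ1) hwW, by
            rw [LinearIsometryEquiv.coe_mul, Function.comp_apply, ← hβdef, sReflLI_self]⟩
        · show ⟪-β, w y⟫ = 0
          rw [inner_neg_left, hβx, neg_zero]
      · exact Set.mem_biUnion ⟨(hiff _).mpr ⟨hβR, hposi⟩, w, hwW, rfl⟩ hβx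
    · -- the union of hyperplanes is closed
      refine Set.Finite.isClosed_biUnion ?_ fun γ _ => ?_
      · exact Set.Finite.subset (Rpos.finite_toSet) fun γ hγ => hγ.1
      · exact isClosed_eq (Continuous.inner continuous_const continuous_id) continuous_const
  · -- union of hyperplanes ⊆ closure K
    rintro x hx
    simp only [Set.mem_iUnion, Set.mem_setOf_eq] at hx
    obtain ⟨γ, ⟨hγpos, hγorb⟩, hγx⟩ := hx
    have hγR : γ ∈ R := ((hiff γ).mp hγpos).1
    have hγ1 : ‖γ‖ = 1 := hR.1 γ hγR
    set D : Finset V := R.filter (fun δ => δ ≠ γ ∧ δ ≠ -γ) with hD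
    obtain ⟨v, hv0, hv⟩ : ∃ v, ⟪γ, v⟫ = 0 ∧ ∀ δ ∈ D, ⟪δ, v⟫ ≠ 0 := by
      apply exists_generic_dir
      intro δ hδ
      have hmem := Finset.mem_filter.mp hδ
      have hδR := hmem.1
      have hδγ := hmem.2.1
      have hδγ' := hmem.2.2
      have hδ1 : ‖δ‖ = 1 := hR.1 δ hδR
      refine ⟨δ - ⟪γ, δ⟫ • γ, ?_, ?_⟩
      · rw [inner_sub_right, real_inner_smul_right, inner_self_one hγ1, mul_one, sub_self]
      · rw [inner_sub_right, real_inner_smul_right, inner_self_one hδ1]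
        intro hcontra
        have hsq : ⟪γ, δ⟫ * ⟪γ, δ⟫ = 1 := by
          have hc := real_inner_comm δ γ
          rw [← hc] at hcontra
          linarith
        rcases mul_self_eq_one_iff.mp hsq with h1 | h1
        · exact hδγ ((inner_eq_one_iff_of_norm_eq_one hγ1 hδ1).mp h1).symm
        · apply hδγ'
          have : ⟪γ, -δ⟫ = 1 := by rw [inner_neg_right, h1, neg_neg]
          have := (inner_eq_one_iff_of_norm_eq_one hγ1 (by rw [norm_neg]; exact hδ1)).mp this
          rw [this, neg_neg]
    rw [Metric.mem_closure_iff]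
    intro ε hε
    have hden : (0:ℝ) < ε / (‖v‖ + 1) := by positivity
    obtain ⟨t, htIoo, ht⟩ := (Set.Ioo_infinite hden).exists_notMem_finset
      (insert (0:ℝ) (D.image fun δ => -⟪δ, x⟫ / ⟪δ, v⟫))
    obtain ⟨ht0, htε⟩ := htIoo
    set y := x + t • v with hydef
    have hy0 : ⟪γ, y⟫ = 0 := by
      rw [hydef, inner_add_right, real_inner_smul_right, hγx, hv0]; ring
    have hygen : ∀ δ ∈ R, δ ≠ γ → δ ≠ -γ → ⟪δ, y⟫ ≠ 0 := by
      intro δ hδR h1 h2 hcontra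
      have hδD : δ ∈ D := Finset.mem_filter.mpr ⟨hδR, h1, h2⟩
      rw [hydef, inner_add_right, real_inner_smul_right] at hcontra
      apply ht
      refine Finset.mem_insert.mpr (Or.inr (Finset.mem_image.mpr ⟨δ, hδD, ?_⟩))
      have hδv := hv δ hδD
      field_simp
      linarith
    obtain ⟨w, hwW, hyK⟩ := generic_mem_K hR hu hiff hS α hα horbit hγpos hγorb hy0 hygen
    refine ⟨y, Set.mem_biUnion hwW hyK, ?_⟩
    rw [hydef, dist_eq_norm]
    have : x - (x + t • v) = -(t • v) := by abel
    rw [this, norm_neg, norm_smul, Real.norm_eq_abs, abs_of_pos ht0]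
    calc t * ‖v‖ ≤ t * (‖v‖ + 1) := by nlinarith [norm_nonneg v]
      _ < ε / (‖v‖ + 1) * (‖v‖ + 1) := by
          apply mul_lt_mul_of_pos_right htε
          nlinarith [norm_nonneg v]
      _ = ε := by field_simp
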